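/- With T = L + M and R = K + M as above, if L is the fraction field of K, then R is a faithfully flat K-module. -/

import Mathlib

section Setup

variable {T : Type*} [CommRing T] [IsDomain T]

/-- The subring `K + M` of `T`, for a subring `K` and an ideal `M` of `T`. -/
def ringR (K : Subring T) (M : Ideal T) : Subring T where
  carrier := {t | ∃ k ∈ K, ∃ m ∈ M, t = k + m}
  one_mem' := ⟨1, K.one_mem, 0, M.zero_mem, by ring⟩
  zero_mem' := ⟨0, K.zero_mem, 0, M.zero_mem, by ring⟩
  add_mem' := by
    rintro a b ⟨k1, hk1, m1, hm1, rfl⟩ ⟨k2, hk2, m2, hm2, rfl⟩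
    exact ⟨k1 + k2, K.add_mem hk1 hk2, m1 + m2, M.add_mem hm1 hm2, by ring⟩
  neg_mem' := by
    rintro a ⟨k, hk, m, hm, rfl⟩
    exact ⟨-k, K.neg_mem hk, -m, M.neg_mem hm, by ring⟩
  mul_mem' := by
    rintro a b ⟨k1, hk1, m1, hm1, rfl⟩ ⟨k2, hk2, m2, hm2, rfl⟩
    refine ⟨k1 * k2, K.mul_mem hk1 hk2, k1 * m2 + m1 * k2 + m1 * m2, ?_, by ring⟩
    exact M.add_mem (M.add_mem (M.mul_mem_left _ hm2) (M.mul_mem_right _ hm1))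
      (M.mul_mem_left _ hm2)

theorem K_le_ringR (K : Subring T) (M : Ideal T) : K ≤ ringR K M :=
  fun k hk => ⟨k, hk, 0, M.zero_mem, (add_zero k).symm⟩

/-- An ideal `A` of `T`, viewed as a module over a subring `S` of `T`. -/
def idealAsMod (S : Subring T) (A : Ideal T) : Submodule ↥S T where
  carrier := A
  add_mem' := fun ha hb => A.add_mem ha hb
  zero_mem' := A.zero_mem
  smul_mem' := fun r a ha => A.mul_mem_left (r : T) ha

/-- The subring `L` of `T` is a field. -/
def IsFieldSub (L : Subring T) : Prop := ∀ x ∈ L, x ≠ 0 → ∃ y ∈ L, x * y = 1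

/-- `T = L ⊕ M` as additive groups: `L` is a retract of `T` with maximal ideal `M`. -/
def DirectSumDecomp (L : Subring T) (M : Ideal T) : Prop :=
  (∀ t : T, ∃ l ∈ L, ∃ m ∈ M, t = l + m) ∧ ∀ x ∈ L, x ∈ M → x = 0

/-- `L` is the field of fractions of `K` (inside `T`). -/
def IsFracOf (K L : Subring T) : Prop :=
  ∀ l ∈ L, ∃ a ∈ K, ∃ b ∈ K, b ≠ 0 ∧ l * b = a

/-- The module structure on a subring over a smaller subring. -/
noncomputable def modOfLE {K L : Subring T} (h : K ≤ L) : Module ↥K ↥L :=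
  ((Subring.inclusion h).toAlgebra).toModule

/-- `T` localized at the prime `M` is a valuation domain. -/
def ValAtPrime (M : Ideal T) (hp : M.IsPrime) : Prop :=
  @ValuationRing (@Localization.AtPrime T _ M hp) _
    (@IsLocalization.isDomain_of_local_atPrime T _ _ M hp)

/-- A Prüfer domain: every nonzero finitely generated ideal is invertible. -/
def IsPruferDomain (A : Type*) [CommRing A] [IsDomain A] : Prop :=
  ∀ I : Ideal A, I ≠ ⊥ → I.FG →
    IsUnit (I : FractionalIdeal (nonZeroDivisors A) (FractionRing A))

/-- A GCD domain: any two nonzero elements admit a greatest common divisor. -/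
def IsGCDDomain (A : Type*) [CommRing A] [IsDomain A] : Prop :=
  ∀ a b : A, a ≠ 0 → b ≠ 0 →
    ∃ g : A, g ∣ a ∧ g ∣ b ∧ ∀ c : A, c ∣ a → c ∣ b → c ∣ g

/-- The algebra structure of the fraction field of `T` over a subring of `T`. -/
noncomputable def algFrac (S : Subring T) : Algebra ↥S (FractionRing T) :=
  ((algebraMap T (FractionRing T)).comp S.subtype).toAlgebra

end Setup

theorem myFlatProd {R A B : Type*} [CommRing R] [AddCommGroup A] [AddCommGroup B]
    [Module R A] [Module R B] [Module.Flat R A] [Module.Flat R B] :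
    Module.Flat R (A × B) := by
  rw [Module.Flat.iff_rTensor_injective']
  intro I
  have key : ∀ x : TensorProduct R I (A × B),
      (TensorProduct.prodRight R R R A B) ((LinearMap.rTensor (A × B) I.subtype) x) =
      ((LinearMap.rTensor A I.subtype).prodMap (LinearMap.rTensor B I.subtype))
        ((TensorProduct.prodRight R R I A B) x) := by
    intro x
    induction x using TensorProduct.induction_on with
    | zero => simp; rfl
    | tmul i ab =>
      obtain ⟨a, b⟩ := ab
      simp
    | add x y hx hy => simp [map_add, hx, hy]
  intro x y h
  have h2 := congrArg (TensorProduct.prodRight R R R A B) h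
  rw [key, key, LinearMap.prodMap_apply, LinearMap.prodMap_apply, Prod.ext_iff] at h2
  have hA := (Module.Flat.iff_rTensor_injective' (R := R) (M := A)).mp inferInstance I
  have hB := (Module.Flat.iff_rTensor_injective' (R := R) (M := B)).mp inferInstance I
  exact (TensorProduct.prodRight R R I A B).injective (Prod.ext_iff.mpr ⟨hA h2.1, hB h2.2⟩)

set_option maxHeartbeats 2000000 in
set_option synthInstance.maxHeartbeats 400000 in
theorem stmt_6 {T : Type*} [CommRing T] [IsDomain T]
    (L : Subring T) (M : Ideal T) (K : Subring T)
    (hL : IsFieldSub L) (hM : M.IsMaximal) (hM0 : M ≠ ⊥)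
    (hLM : DirectSumDecomp L M) (hKL : K ≤ L) (hKne : K ≠ L)
    (hfrac : IsFracOf K L) :
    @Module.FaithfullyFlat ↥K ↥(ringR K M) _ _ (modOfLE (K_le_ringR K M)) := by
  classical
  -- `L` is a field
  have hnt : (0 : ↥L) ≠ 1 := fun h => zero_ne_one (congrArg Subtype.val h : (0 : T) = 1)
  have hLf : IsField ↥L :=
    { exists_pair_ne := ⟨0, 1, hnt⟩
      mul_comm := mul_comm
      mul_inv_cancel := fun {a} ha => by
        obtain ⟨y, hy, hxy⟩ := hL a.1 a.2 (fun h => ha (Subtype.ext h))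
        exact ⟨⟨y, hy⟩, Subtype.ext hxy⟩ }
  letI : Field ↥L := hLf.toField
  letI : Algebra ↥K ↥L := (Subring.inclusion hKL).toAlgebra
  -- `L` is the localization of `K` at nonzero divisors
  haveI hloc : IsLocalization (nonZeroDivisors ↥K) ↥L := by
    refine ⟨?_, ?_, ?_⟩
    · rintro ⟨b, hbnd⟩
      have hb0 : b ≠ 0 := nonZeroDivisors.ne_zero hbnd
      have hne : (algebraMap ↥K ↥L) b ≠ 0 := fun h =>
        hb0 (Subtype.ext (congrArg Subtype.val h : (b : T) = 0))
      exact isUnit_iff_ne_zero.mpr hne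
    · intro z
      obtain ⟨a, ha, b, hb, hbne, heq⟩ := hfrac z.1 z.2
      have hbK : (⟨b, hb⟩ : ↥K) ≠ 0 := fun h => hbne (congrArg Subtype.val h)
      exact ⟨⟨⟨a, ha⟩, ⟨⟨b, hb⟩, mem_nonZeroDivisors_of_ne_zero hbK⟩⟩, Subtype.ext heq⟩
    · intro x y h
      have h2 := congrArg Subtype.val h
      have hxy : x = y := Subtype.ext h2
      exact ⟨1, by rw [hxy]⟩
  haveI hflatL : Module.Flat ↥K ↥L := IsLocalization.flat ↥L (nonZeroDivisors ↥K)
  -- `M` as an `L`-vector space, hence flat over `K`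
  set M' := ↥(idealAsMod L M) with hM'
  haveI : Module.Free ↥L M' := Module.Free.of_divisionRing ↥L M'
  haveI : Module.Flat ↥L M' := inferInstance
  letI : Module ↥K M' := Module.compHom M' (Subring.inclusion hKL)
  haveI : IsScalarTower ↥K ↥L M' := ⟨fun k l m => by
    show ((Subring.inclusion hKL k) * l) • m = (Subring.inclusion hKL k) • (l • m)
    rw [mul_smul]⟩
  haveI hflatM' : Module.Flat ↥K M' := Module.Flat.trans ↥K ↥L M'
  haveI hflatP : Module.Flat ↥K (↥K × M') := myFlatProd
  letI instR : Module ↥K ↥(ringR K M) := modOfLE (K_le_ringR K M)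
  have hsmulR : ∀ (k : ↥K) (r : ↥(ringR K M)),
      ((k • r : ↥(ringR K M)) : T) = (k : T) * (r : T) := fun k r => rfl
  have hsmulK : ∀ (k k' : ↥K), ((k • k' : ↥K) : T) = (k : T) * (k' : T) := fun _ _ => rfl
  have hsmulM : ∀ (k : ↥K) (m : M'), ((k • m : M') : T) = (k : T) * (m : T) := fun k m => rfl
  -- the `K`-linear iso `K × M ≃ R`
  let g : (↥K × M') →ₗ[↥K] ↥(ringR K M) :=
    { toFun := fun p => ⟨(p.1 : T) + (p.2 : T), p.1, p.1.2, p.2, p.2.2, rfl⟩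
      map_add' := fun p q => Subtype.ext (add_add_add_comm (p.1 : T) (q.1 : T) (p.2 : T) (q.2 : T))
      map_smul' := fun k p => Subtype.ext (by
        rw [RingHom.id_apply, hsmulR]
        show ((k • p).1 : T) + ((k • p).2 : T) = _
        rw [Prod.smul_fst, Prod.smul_snd, hsmulK, hsmulM]
        push_cast; ring) }
  have hinj : Function.Injective g := by
    rintro ⟨k1, m1⟩ ⟨k2, m2⟩ h
    have h' : (k1 : T) + (m1 : T) = (k2 : T) + (m2 : T) := congrArg Subtype.val h
    have hmem1 : (k1 : T) - (k2 : T) ∈ L := L.sub_mem (hKL k1.2) (hKL k2.2)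
    have hmem2 : (k1 : T) - (k2 : T) ∈ M := by
      have : (k1 : T) - (k2 : T) = (m2 : T) - (m1 : T) := by linear_combination h'
      rw [this]; exact M.sub_mem m2.2 m1.2
    have h0 := hLM.2 _ hmem1 hmem2
    have hk : k1 = k2 := Subtype.ext (by linear_combination h0)
    have hm : m1 = m2 := Subtype.ext (by linear_combination h' - h0)
    rw [hk, hm]
  have hsurj : Function.Surjective g := by
    rintro ⟨t, k, hk, m, hm, rfl⟩
    exact ⟨(⟨k, hk⟩, ⟨m, hm⟩), rfl⟩
  let e : (↥K × M') ≃ₗ[↥K] ↥(ringR K M) := LinearEquiv.ofBijective g ⟨hinj, hsurj⟩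
  haveI hflatR : Module.Flat ↥K ↥(ringR K M) := Module.Flat.of_linearEquiv e.symm
  refine { toFlat := hflatR, submodule_ne_top := ?_ }
  intro m hm htop
  let π : ↥(ringR K M) →ₗ[↥K] ↥K := (LinearMap.fst ↥K ↥K M') ∘ₗ e.symm.toLinearMap
  have h1 : (1 : ↥(ringR K M)) ∈ m • (⊤ : Submodule ↥K ↥(ringR K M)) := by rw [htop]; trivial
  have h2 : π 1 ∈ Submodule.map π (m • ⊤) := Submodule.mem_map_of_mem h1
  rw [Submodule.map_smul''] at h2
  have h3 : π 1 ∈ m • (⊤ : Submodule ↥K ↥K) := smul_mono_right m (le_top : Submodule.map π ⊤ ≤ ⊤) h2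
  have h5 : m • (⊤ : Submodule ↥K ↥K) ≤ (m : Submodule ↥K ↥K) :=
    Submodule.smul_le.mpr fun r hr n _ => by
      rw [smul_eq_mul]; exact m.mul_mem_right n hr
  have h6 : π 1 = 1 := by
    have he : e.symm 1 = ((1 : ↥K), (0 : M')) := by
      rw [LinearEquiv.symm_apply_eq]
      exact Subtype.ext (add_zero (1 : T)).symm
    show (LinearMap.fst ↥K ↥K M') (e.symm 1) = 1
    rw [he]
    rfl
  exact hm.ne_top (m.eq_top_iff_one.mpr (h6 ▸ h5 h3))
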